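/- Let 𝔱 be a finite-dimensional real vector space, let B be a basis of 𝔱, let L be the additive subgroup of 𝔱 generated by B (a lattice), and let T := 𝔱/L be the quotient group (a torus). Let 𝔫 ⊆ 𝔱 be a linear subspace, let N be the image of 𝔫 under the projection 𝔱 → T (a connected Lie subgroup of T), let 𝔡 be a linear complement of 𝔫 in 𝔱 (𝔡 ∩ 𝔫 = {0} and 𝔡 + 𝔫 = 𝔱), and let π_𝔡 : 𝔱 → 𝔡 be the linear projection onto 𝔡 with kernel 𝔫. Then the composite p : 𝔡 ↪ 𝔱 → T → T/N is a surjective group homomorphism whose kernel is Q := π_𝔡(L); consequently p induces a group isomorphism 𝔡/Q ≅ T/N. Moreover Q is a quasilattice in 𝔡: it is generated over ℤ by the finitely many vectors π_𝔡(b), b ∈ B, which span 𝔡 over ℝ. (This makes precise the proposition that the quotient of a torus by a Lie subgroup is a quasitorus of dimension dim T − dim N.) -/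

import Mathlib

/-- The quotient of a torus `T = 𝔱/L` by the connected Lie subgroup `N` with Lie
algebra `𝔫 ⊆ 𝔱` is a quasitorus: choosing a complement `𝔡` of `𝔫` and letting
`π𝔡` be the projection onto `𝔡` with kernel `𝔫`, the composite
`p : 𝔡 → 𝔱 → T → T/N` is a surjective group homomorphism with kernel
`Q = π𝔡(L)`, hence induces a group isomorphism `𝔡/Q ≅ T/N`; moreover `Q` is a
quasilattice in `𝔡`: it is generated over `ℤ` by the vectors `π𝔡(b i)`, which
span `𝔡` over `ℝ`. -/
theorem torus_quotient_is_quasitorus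
    {𝔱 : Type*} [AddCommGroup 𝔱] [Module ℝ 𝔱] [FiniteDimensional ℝ 𝔱]
    {ι : Type*} [Fintype ι] (b : Module.Basis ι ℝ 𝔱)
    (L : AddSubgroup 𝔱) (hL : L = AddSubgroup.closure (Set.range b))
    (𝔫 𝔡 : Submodule ℝ 𝔱) (hcompl : IsCompl 𝔡 𝔫)
    (N : AddSubgroup (𝔱 ⧸ L))
    (hN : N = AddSubgroup.map (QuotientAddGroup.mk' L) 𝔫.toAddSubgroup)
    (π𝔡 : 𝔱 →ₗ[ℝ] ↥𝔡) (hπ𝔡 : π𝔡 = 𝔡.linearProjOfIsCompl 𝔫 hcompl)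
    (p : ↥𝔡 →+ (𝔱 ⧸ L) ⧸ N)
    (hp : p = (QuotientAddGroup.mk' N).comp
      ((QuotientAddGroup.mk' L).comp 𝔡.subtype.toAddMonoidHom))
    (Q : AddSubgroup ↥𝔡) (hQ : Q = AddSubgroup.map π𝔡.toAddMonoidHom L) :
    Function.Surjective p ∧
    p.ker = Q ∧
    (∃ e : (↥𝔡 ⧸ Q) ≃+ ((𝔱 ⧸ L) ⧸ N),
      ∀ x : ↥𝔡, e (QuotientAddGroup.mk x) = p x) ∧
    Q = AddSubgroup.closure (Set.range fun i => π𝔡 (b i)) ∧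
    Submodule.span ℝ (Set.range fun i => π𝔡 (b i)) = ⊤ := by
  have hsub : ∀ x : 𝔱, x - π𝔡 x ∈ 𝔫 := by
    intro x
    rw [hπ𝔡, ← Submodule.linearProjOfIsCompl_apply_eq_zero_iff hcompl (q := 𝔫)]
    simp [Submodule.linearProjOfIsCompl_apply_left]
    exact sub_self _
  have hπleft : ∀ x : ↥𝔡, π𝔡 (x : 𝔱) = x := by
    intro x; rw [hπ𝔡]; exact Submodule.linearProjOfIsCompl_apply_left hcompl x
  have hsurj : Function.Surjective p := by
    intro z
    obtain ⟨y, rfl⟩ := QuotientAddGroup.mk'_surjective N z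
    obtain ⟨x, rfl⟩ := QuotientAddGroup.mk'_surjective L y
    refine ⟨π𝔡 x, ?_⟩
    rw [hp]
    simp only [AddMonoidHom.comp_apply, LinearMap.toAddMonoidHom_coe,
      Submodule.subtype_apply]
    rw [QuotientAddGroup.mk'_eq_mk']
    refine ⟨(QuotientAddGroup.mk' L) (x - π𝔡 x), ?_, ?_⟩
    · rw [hN]; exact ⟨x - π𝔡 x, hsub x, rfl⟩
    · rw [← map_add]; congr 1; abel
  have hker : p.ker = Q := by
    ext x
    rw [hQ]
    constructor
    · intro hx
      rw [AddMonoidHom.mem_ker, hp] at hx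
      simp only [AddMonoidHom.comp_apply, LinearMap.toAddMonoidHom_coe,
        Submodule.subtype_apply] at hx
      rw [QuotientAddGroup.mk'_apply, QuotientAddGroup.eq_zero_iff, hN] at hx
      obtain ⟨n, hn, hnx⟩ := hx
      rw [QuotientAddGroup.mk'_eq_mk'] at hnx
      obtain ⟨l, hl, hlx⟩ := hnx
      refine ⟨l, hl, ?_⟩
      have hn0 : π𝔡 n = 0 := by
        rw [hπ𝔡]; exact Submodule.linearProjOfIsCompl_apply_right' hcompl hn
      have : π𝔡 l = π𝔡 (n + l) := by rw [map_add, hn0, zero_add]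
      simp only [LinearMap.toAddMonoidHom_coe]
      rw [this, hlx, hπleft]
    · rintro ⟨l, hl, rfl⟩
      rw [AddMonoidHom.mem_ker, hp]
      simp only [AddMonoidHom.comp_apply, LinearMap.toAddMonoidHom_coe,
        Submodule.subtype_apply]
      rw [QuotientAddGroup.mk'_apply, QuotientAddGroup.eq_zero_iff, hN]
      refine ⟨(π𝔡 l : 𝔱) - l, ?_, ?_⟩
      · have := hsub l
        have h2 : ((π𝔡 l : 𝔱) - l) = -(l - π𝔡 l) := by abel
        rw [h2]; exact neg_mem this
      · rw [QuotientAddGroup.mk'_apply, QuotientAddGroup.mk'_apply,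
          QuotientAddGroup.eq_iff_sub_mem]
        have : (π𝔡 l : 𝔱) - l - (π𝔡 l : 𝔱) = -l := by abel
        rw [this]; exact neg_mem hl
  refine ⟨hsurj, hker, ?_, ?_, ?_⟩
  · refine ⟨(QuotientAddGroup.quotientAddEquivOfEq hker.symm).trans
      (QuotientAddGroup.quotientKerEquivOfSurjective p hsurj), fun x => ?_⟩
    rfl
  · rw [hQ, hL]
    rw [AddMonoidHom.map_closure]
    congr 1
    ext y
    simp [Set.range_comp]
  · have : (Set.range fun i => π𝔡 (b i)) = π𝔡 '' Set.range b := by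
      ext y; simp [Set.range_comp]
    rw [this, ← Submodule.map_span, b.span_eq, Submodule.map_top,
      LinearMap.range_eq_top.2]
    intro x
    exact ⟨x, hπleft x⟩
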